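/- Let K be a field, let Ψ : K² × K² × K² × K² → K be a symmetric 4-multilinear map, and let u ∈ K² be nonzero and such that Ψ(x, y, z, u) = 0 for all x, y, z ∈ K². Then there exists F ∈ K such that Ψ(x, y, z, w) = F · ε(u,x) ε(u,y) ε(u,z) ε(u,w) for all x, y, z, w ∈ K². (This is the algebraic core of the claim that a totally symmetric Weyl curvature spinor Ψ_{ABCD} annihilated by a principal spinor, Ψ_{ABCD} o^D = 0, is of Petrov type N: Ψ_{ABCD} = F · o_A o_B o_C o_D.) -/
import Mathlib


/-- The standard symplectic form ε(a,b) = a₀b₁ − a₁b₀ on K². -/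
def eps {K : Type*} [Field K] (a b : Fin 2 → K) : K := a 0 * b 1 - a 1 * b 0

/-- a symmetric 4-multilinear map Ψ on K² that is annihilated by a nonzero
spinor u in its last slot is of "Petrov type N":
Ψ(x,y,z,w) = F · ε(u,x) ε(u,y) ε(u,z) ε(u,w) for some F ∈ K. -/
theorem symmetric_quartic_annihilated_is_typeN {K : Type*} [Field K]
    (Ψ : MultilinearMap K (fun _ : Fin 4 => Fin 2 → K) K)
    (hsym : ∀ (e : Equiv.Perm (Fin 4)) (m : Fin 4 → Fin 2 → K),
      Ψ (fun i => m (e i)) = Ψ m)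
    (u : Fin 2 → K) (hu : u ≠ 0)
    (hann : ∀ x y z : Fin 2 → K, Ψ ![x, y, z, u] = 0) :
    ∃ F : K, ∀ x y z w : Fin 2 → K,
      Ψ ![x, y, z, w] = F * (eps u x * eps u y * eps u z * eps u w) := by
  -- choose v with eps u v = 1
  obtain ⟨v, hv⟩ : ∃ v : Fin 2 → K, u 0 * v 1 - u 1 * v 0 = 1 := by
    by_cases h0 : u 0 = 0
    · have h1 : u 1 ≠ 0 := by
        intro h1; apply hu; funext i; fin_cases i <;> simp [h0, h1]
      refine ⟨![-(u 1)⁻¹, 0], ?_⟩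
      simp [h0]
      field_simp
    · refine ⟨![0, (u 0)⁻¹], ?_⟩
      simp
      field_simp
  -- Ψ vanishes whenever some slot is u
  have hzero : ∀ (m : Fin 4 → Fin 2 → K) (j : Fin 4), m j = u → Ψ m = 0 := by
    intro m j hj
    rw [← hsym (Equiv.swap j 3) m]
    have heq : (fun i => m (Equiv.swap j 3 i)) =
        ![m (Equiv.swap j 3 0), m (Equiv.swap j 3 1), m (Equiv.swap j 3 2), u] := by
      funext i
      fin_cases i <;> simp [Equiv.swap_apply_right, hj]
    rw [heq]
    exact hann _ _ _
  refine ⟨Ψ ![v, v, v, v], fun x y z w => ?_⟩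
  -- decomposition of any vector in the basis u, v
  have hdecomp : ∀ p : Fin 2 → K, p = eps p v • u + eps u p • v := by
    intro p
    funext i
    fin_cases i
    · show p 0 = eps p v * u 0 + eps u p * v 0
      simp only [eps]
      linear_combination (-(p 0)) * hv
    · show p 1 = eps p v * u 1 + eps u p * v 1
      simp only [eps]
      linear_combination (-(p 1)) * hv
  set A : Fin 4 → K := fun i => eps (![x, y, z, w] i) v with hA
  set B : Fin 4 → K := fun i => eps u (![x, y, z, w] i) with hB
  have key : Ψ ![x, y, z, w] = Ψ ((fun i => A i • u) + (fun i => B i • v)) := by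
    congr 1
    funext i
    rw [Pi.add_apply]
    exact hdecomp (![x, y, z, w] i)
  rw [key, MultilinearMap.map_add_univ]
  rw [Finset.sum_eq_single (∅ : Finset (Fin 4))]
  · rw [Finset.piecewise_empty, MultilinearMap.map_smul_univ]
    have hvv : (fun _ : Fin 4 => v) = ![v, v, v, v] := by
      funext i; fin_cases i <;> rfl
    rw [hvv, smul_eq_mul, Fin.prod_univ_four]
    simp only [hB, Matrix.cons_val_zero, Matrix.cons_val_one, Matrix.head_cons,
      Matrix.cons_val_two, Matrix.tail_cons, Matrix.cons_val_three]
    ring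
  · intro s _ hs
    obtain ⟨j, hj⟩ := Finset.nonempty_iff_ne_empty.mpr hs
    set P := s.piecewise (fun i => A i • u) (fun i => B i • v) with hP
    have hPj : P j = A j • u := Finset.piecewise_eq_of_mem _ _ _ hj
    have hupd : Function.update P j (A j • u) = P := by
      rw [← hPj]; exact Function.update_eq_self j P
    rw [← hupd, Ψ.map_update_smul]
    rw [hzero (Function.update P j u) j (Function.update_self j u P)]
    exact smul_zero _
  · intro h
    exact absurd (Finset.mem_univ _) h
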